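/- Let v be a Schwartz solenoidal symmetric m-tensor field on ℝⁿ (m ≥ 1, δv = 0). Then for every unit vector ω, every orthonormal basis ω₁,...,ω_{n−1} of ω^⊥, every p ∈ ℝ, and all nonnegative integers ℓ₁,...,ℓₙ with ℓ₁+...+ℓₙ = m−1: ∫_{H_{ω,p}} ⟨v(x), ω₁^{⊙ℓ₁} ⊙ ··· ⊙ ω_{n−1}^{⊙ℓ_{n−1}} ⊙ ω^{⊙(ℓₙ+1)}⟩ dx = 0. -/

import Mathlib

open MeasureTheory
open scoped RealInnerProductSpace
noncomputable section

abbrev E (n : ℕ) := EuclideanSpace ℝ (Fin n)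

/-- Tensor field of order `m` on ℝⁿ, given by its components. -/
abbrev TF (n m : ℕ) := E n → (Fin m → Fin n) → ℝ

/-- Partial derivative in the `i`-th coordinate direction. -/
def pd {n : ℕ} (i : Fin n) (g : E n → ℝ) (x : E n) : ℝ :=
  fderiv ℝ g x (EuclideanSpace.single i 1)

/-- All components of the tensor field are Schwartz functions. -/
def IsSchwartzTF {n m : ℕ} (f : TF n m) : Prop :=
  ∀ idx, ∃ g : SchwartzMap (E n) ℝ, (fun x => f x idx) = ⇑g

/-- The tensor field is symmetric. -/
def IsSymTF {n m : ℕ} (f : TF n m) : Prop :=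
  ∀ (x : E n) (σ : Equiv.Perm (Fin m)) (idx : Fin m → Fin n), f x (idx ∘ σ) = f x idx

/-- Divergence δ of a tensor field (contraction of the derivative in the last index). -/
def div' {n m : ℕ} : TF n m → TF n (m - 1) :=
  match m with
  | 0 => fun _ => fun _ _ => 0
  | _ + 1 => fun u x idx => ∑ i : Fin n, pd i (fun y => u y (Fin.snoc idx i)) x

/-- Iterated divergence δ^k. -/
def divIter {n m : ℕ} : (k : ℕ) → TF n m → TF n (m - k)
  | 0, u => u
  | k + 1, u => div' (divIter k u)

/-- Symmetrization of an `m`-tensor (average over permutations of the indices). -/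
def symz {n m : ℕ} (T : (Fin m → Fin n) → ℝ) : (Fin m → Fin n) → ℝ :=
  fun idx => (m.factorial : ℝ)⁻¹ * ∑ σ : Equiv.Perm (Fin m), T (idx ∘ σ)

/-- Symmetrized derivative (inner differentiation) d. -/
def dsym {n m : ℕ} (v : TF n m) : TF n (m + 1) :=
  fun x => symz (fun idx => pd (idx (Fin.last m)) (fun y => v y (idx ∘ Fin.castSucc)) x)

/-- Iterated symmetrized derivative d^k. -/
def dIter {n m : ℕ} : (k : ℕ) → TF n m → TF n (m + k)
  | 0, v => v
  | k + 1, v => dsym (dIter k v)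

/-- Componentwise Laplacian. -/
def lap {n m : ℕ} (u : TF n m) : TF n m :=
  fun x idx => ∑ i : Fin n, pd i (fun y => pd i (fun z => u z idx) y) x

/-- Full contraction of an `m`-tensor field with a family of `m` vectors
(equivalently, with the symmetric product of those vectors when the field is symmetric). -/
def contr {n m : ℕ} (f : TF n m) (v : Fin m → E n) (x : E n) : ℝ :=
  ∑ idx : Fin m → Fin n, f x idx * ∏ j, v j (idx j)

/-- Contraction with a vector `w` in the last index. -/
def jv {n m : ℕ} (w : E n) : TF n m → TF n (m - 1) :=
  match m with
  | 0 => fun _ => fun _ _ => 0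
  | _ + 1 => fun u x idx => ∑ i : Fin n, w i * u x (Fin.snoc idx i)

/-- Iterated contraction with `w` in the last `k` indices. -/
def jvIter {n m : ℕ} (w : E n) : (k : ℕ) → TF n m → TF n (m - k)
  | 0, u => u
  | k + 1, u => jv w (jvIter w k u)

/-- Integral of a scalar function over the hyperplane `{x : ⟪x, ω⟫ = p}`. -/
def hypInt {n : ℕ} (h : E n → ℝ) (ω : E n) (p : ℝ) : ℝ :=
  ∫ y : ((ℝ ∙ ω)ᗮ : Submodule ℝ (E n)), h (p • ω + (y : E n))

/-- The transversal Radon transform 𝒯^m of a symmetric m-tensor field. -/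
def TRT {n m : ℕ} (g : TF n m) (ω : E n) (p : ℝ) : ℝ :=
  hypInt (contr g (fun _ => ω)) ω p

/-! ### Auxiliary lemmas -/

section Aux

lemma schwartz_decay_bound {N : ℕ} (f : SchwartzMap (E N) ℝ) (K : ℕ) :
    ∃ C : ℝ, 0 ≤ C ∧ ∀ x, |f x| ≤ C * ((1 + ‖x‖) ^ K)⁻¹ := by
  refine ⟨2 ^ K * (Finset.Iic (K, 0)).sup (fun m => SchwartzMap.seminorm ℝ m.1 m.2) f,
    by positivity, fun x => ?_⟩
  have h := SchwartzMap.one_add_le_sup_seminorm_apply (𝕜 := ℝ) (m := (K, 0)) (k := K) (n := 0)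
    le_rfl le_rfl f x
  rw [norm_iteratedFDeriv_zero] at h
  have hpos : (0:ℝ) < (1 + ‖x‖) ^ K := by positivity
  rw [← div_eq_mul_inv, le_div_iff₀ hpos, mul_comm]
  calc (1 + ‖x‖) ^ K * |f x| = (1 + ‖x‖) ^ K * ‖f x‖ := by rw [Real.norm_eq_abs]
  _ ≤ _ := h

lemma one_add_norm_ineq {N : ℕ} (c x : E N) :
    1 + ‖x‖ ≤ (1 + ‖c‖) * (1 + ‖c + x‖) := by
  have h1 : ‖x‖ ≤ ‖c + x‖ + ‖c‖ := by
    have := norm_add_le (c + x) (-c); simpa using this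
  have h2 : (0:ℝ) ≤ ‖c‖ := norm_nonneg _
  have h3 : (0:ℝ) ≤ ‖c + x‖ := norm_nonneg _
  nlinarith

lemma inv_pow_bound {N : ℕ} (c x : E N) (K : ℕ) :
    ((1 + ‖c + x‖) ^ K)⁻¹ ≤ (1 + ‖c‖) ^ K * ((1 + ‖x‖) ^ K)⁻¹ := by
  have key : ((1 + ‖c + x‖) ^ K)⁻¹ * (1 + ‖x‖) ^ K ≤ (1 + ‖c‖) ^ K := by
    rw [inv_mul_le_iff₀ (by positivity), ← mul_pow, mul_comm ((1 + ‖c + x‖)) _]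
    exact pow_le_pow_left₀ (by positivity) (one_add_norm_ineq c x) K
  calc ((1 + ‖c + x‖) ^ K)⁻¹
      = (((1 + ‖c + x‖) ^ K)⁻¹ * (1 + ‖x‖) ^ K) * ((1 + ‖x‖) ^ K)⁻¹ := by
        field_simp
    _ ≤ (1 + ‖c‖) ^ K * ((1 + ‖x‖) ^ K)⁻¹ :=
        mul_le_mul_of_nonneg_right key (by positivity)

lemma integrable_decay {d : ℕ} (C : ℝ) :
    Integrable (fun z : EuclideanSpace ℝ (Fin d) => C * ((1 + ‖z‖) ^ (d+1 : ℕ))⁻¹) := by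
  have h : Integrable (fun z : EuclideanSpace ℝ (Fin d) => (1 + ‖z‖) ^ (-((d:ℝ)+1))) :=
    integrable_one_add_norm (E := EuclideanSpace ℝ (Fin d)) (r := (d:ℝ)+1)
      (by rw [finrank_euclideanSpace_fin]; norm_num)
  have heq : ∀ z : EuclideanSpace ℝ (Fin d),
      (1 + ‖z‖) ^ (-((d:ℝ)+1)) = ((1 + ‖z‖) ^ (d+1 : ℕ))⁻¹ := by
    intro z
    rw [Real.rpow_neg (by positivity),
      show ((d:ℝ)+1) = ((d+1 : ℕ) : ℝ) by push_cast; ring, Real.rpow_natCast]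
  simp_rw [heq] at h
  exact h.const_mul C

lemma subIntegral_eq {N d : ℕ} (K : Submodule ℝ (E N)) (B : OrthonormalBasis (Fin d) ℝ K)
    (g : K → ℝ) : ∫ y : K, g y = ∫ z : EuclideanSpace ℝ (Fin d), g (B.repr.symm z) :=
  ((B.measurePreserving_repr_symm).integral_comp
    (B.repr.symm.toHomeomorph.measurableEmbedding) g).symm

variable {d N : ℕ} (Φ : EuclideanSpace ℝ (Fin d) →ₗᵢ[ℝ] E N)

lemma schwartz_comp_integrable (f : SchwartzMap (E N) ℝ) (c : E N) :
    Integrable (fun z : EuclideanSpace ℝ (Fin d) => f (c + Φ z)) := by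
  obtain ⟨C, hC, hCf⟩ := schwartz_decay_bound f (d+1)
  refine (integrable_decay (C * (1 + ‖c‖) ^ (d+1 : ℕ))).mono'
    ((f.continuous.comp (continuous_const.add Φ.continuous)).aestronglyMeasurable)
    (Filter.Eventually.of_forall fun z => ?_)
  rw [Real.norm_eq_abs]
  calc |f (c + Φ z)| ≤ C * ((1 + ‖c + Φ z‖) ^ (d+1 : ℕ))⁻¹ := hCf _
  _ ≤ C * ((1 + ‖c‖) ^ (d+1 : ℕ) * ((1 + ‖Φ z‖) ^ (d+1 : ℕ))⁻¹) :=
      mul_le_mul_of_nonneg_left (inv_pow_bound c (Φ z) (d+1)) hC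
  _ = C * (1 + ‖c‖) ^ (d+1 : ℕ) * ((1 + ‖z‖) ^ (d+1 : ℕ))⁻¹ := by
      rw [Φ.norm_map]; ring

lemma hasDerivAt_param (f : SchwartzMap (E N) ℝ) (c w : E N) (t₀ : ℝ) :
    HasDerivAt (fun t : ℝ => ∫ z : EuclideanSpace ℝ (Fin d), f (c + t • w + Φ z))
      (∫ z : EuclideanSpace ℝ (Fin d), fderiv ℝ f (c + t₀ • w + Φ z) w) t₀ := by
  set g := LineDeriv.lineDerivOpCLM ℝ (SchwartzMap (E N) ℝ) w f with hg
  obtain ⟨C, hC, hCg⟩ := schwartz_decay_bound g (d+1)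
  have key := hasDerivAt_integral_of_dominated_loc_of_deriv_le (μ := volume)
    (F := fun t (z : EuclideanSpace ℝ (Fin d)) => f (c + t • w + Φ z))
    (F' := fun t (z : EuclideanSpace ℝ (Fin d)) => g (c + t • w + Φ z))
    (bound := fun z => (C * (1 + (‖c‖ + (|t₀| + 1) * ‖w‖)) ^ (d+1 : ℕ)) * ((1 + ‖z‖) ^ (d+1 : ℕ))⁻¹)
    (x₀ := t₀) (Metric.ball_mem_nhds t₀ one_pos)
    (Filter.Eventually.of_forall fun t =>
      (f.continuous.comp ((continuous_const.add continuous_const).add Φ.continuous)).aestronglyMeasurable)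
    (by simpa [add_assoc] using schwartz_comp_integrable Φ f (c + t₀ • w))
    ((g.continuous.comp ((continuous_const.add continuous_const).add Φ.continuous)).aestronglyMeasurable)
    (Filter.Eventually.of_forall fun z => ?_) (integrable_decay _)
    (Filter.Eventually.of_forall fun z => ?_)
  · simp only [hg, LineDeriv.lineDerivOpCLM_apply, SchwartzMap.lineDerivOp_apply_eq_fderiv] at key
    exact key.2
  · -- bound
    intro t ht
    have hb : 1 + ‖c + t • w‖ ≤ 1 + (‖c‖ + (|t₀| + 1) * ‖w‖) := by
      have h1 : ‖c + t • w‖ ≤ ‖c‖ + |t| * ‖w‖ := by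
        simpa [norm_smul] using norm_add_le c (t • w)
      have h2 : |t| ≤ |t₀| + 1 := by
        have := Metric.mem_ball.mp ht
        rw [Real.dist_eq] at this
        have := abs_sub_abs_le_abs_sub t t₀
        linarith
      have h3 : (0:ℝ) ≤ ‖w‖ := norm_nonneg w
      nlinarith
    rw [Real.norm_eq_abs]
    calc |g (c + t • w + Φ z)| ≤ C * ((1 + ‖c + t • w + Φ z‖) ^ (d+1 : ℕ))⁻¹ := by
          exact hCg _
    _ ≤ C * ((1 + ‖c + t • w‖) ^ (d+1 : ℕ) * ((1 + ‖Φ z‖) ^ (d+1 : ℕ))⁻¹) :=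
        mul_le_mul_of_nonneg_left (inv_pow_bound (c + t • w) (Φ z) (d+1)) hC
    _ ≤ C * ((1 + (‖c‖ + (|t₀| + 1) * ‖w‖)) ^ (d+1 : ℕ) * ((1 + ‖Φ z‖) ^ (d+1 : ℕ))⁻¹) := by
        refine mul_le_mul_of_nonneg_left (mul_le_mul_of_nonneg_right
          (pow_le_pow_left₀ (by positivity) hb _) (by positivity)) hC
    _ = (C * (1 + (‖c‖ + (|t₀| + 1) * ‖w‖)) ^ (d+1 : ℕ)) * ((1 + ‖z‖) ^ (d+1 : ℕ))⁻¹ := by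
        rw [Φ.norm_map]; ring
  · -- differentiability
    intro t ht
    have h1 : HasDerivAt (fun t : ℝ => c + t • w + Φ z) w t := by
      simpa using (((hasDerivAt_id t).smul_const w).const_add c).add_const (Φ z)
    have h2 := (f.differentiableAt.hasFDerivAt).comp_hasDerivAt t h1
    simp only [hg, LineDeriv.lineDerivOpCLM_apply, SchwartzMap.lineDerivOp_apply_eq_fderiv]
    exact h2

lemma integral_fderiv_tangential (f : SchwartzMap (E N) ℝ) (c : E N)
    (e₀ : EuclideanSpace ℝ (Fin d)) :
    ∫ z : EuclideanSpace ℝ (Fin d), fderiv ℝ f (c + Φ z) (Φ e₀) = 0 := by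
  set w := Φ e₀ with hw
  have hconst : (fun t : ℝ => ∫ z : EuclideanSpace ℝ (Fin d), f (c + t • w + Φ z))
      = fun _ : ℝ => ∫ z : EuclideanSpace ℝ (Fin d), f (c + Φ z) := by
    funext t
    have hz : ∀ z : EuclideanSpace ℝ (Fin d), c + t • w + Φ z = c + Φ (z + t • e₀) := by
      intro z
      rw [map_add, _root_.map_smul, ← hw]
      abel
    simp_rw [hz]
    exact integral_add_right_eq_self (μ := volume)
      (fun z : EuclideanSpace ℝ (Fin d) => f (c + Φ z)) (t • e₀)
  have h1 := hasDerivAt_param Φ f c w 0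
  have h2 : HasDerivAt (fun t : ℝ => ∫ z : EuclideanSpace ℝ (Fin d), f (c + t • w + Φ z))
      (0 : ℝ) 0 := by
    rw [hconst]; exact hasDerivAt_const 0 _
  have h3 := h1.unique h2
  simpa using h3

lemma integral_comp_const_of_deriv_zero (f : SchwartzMap (E N) ℝ) (w : E N)
    (hd : ∀ t : ℝ, (∫ z : EuclideanSpace ℝ (Fin d), fderiv ℝ f (t • w + Φ z) w) = 0)
    (p q : ℝ) :
    (∫ z : EuclideanSpace ℝ (Fin d), f (p • w + Φ z))
      = ∫ z : EuclideanSpace ℝ (Fin d), f (q • w + Φ z) := by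
  set F := fun t : ℝ => ∫ z : EuclideanSpace ℝ (Fin d), f (t • w + Φ z) with hF
  have hder : ∀ t : ℝ, HasDerivAt F 0 t := by
    intro t
    have := hasDerivAt_param Φ f 0 w t
    simp only [zero_add] at this
    rw [hd t] at this
    exact this
  exact is_const_of_deriv_eq_zero (fun t => (hder t).differentiableAt)
    (fun t => (hder t).deriv) p q

lemma norm_split_bound {N : ℕ} (ω x' : E N) (hω : ‖ω‖ = 1) (hperp : ⟪ω, x'⟫ = 0)
    (t : ℝ) (K : ℕ) :
    ((1 + ‖t • ω + x'‖) ^ (2 * K))⁻¹ ≤ 2 ^ K * (((1 + |t|) ^ K)⁻¹ * ((1 + ‖x'‖) ^ K)⁻¹) := by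
  have hx2 : ‖t • ω + x'‖ ^ 2 = t ^ 2 + ‖x'‖ ^ 2 := by
    rw [norm_add_sq_real, real_inner_smul_left, hperp, norm_smul, hω]
    simp [Real.norm_eq_abs, sq_abs]
  have h1 : (1 + |t|) * (1 + ‖x'‖) ≤ 2 * (1 + ‖t • ω + x'‖) ^ 2 := by
    have h2 : (0:ℝ) ≤ ‖x'‖ := norm_nonneg _
    have h3 : (0:ℝ) ≤ |t| := abs_nonneg _
    have h4 : (0:ℝ) ≤ ‖t • ω + x'‖ := norm_nonneg _
    have h5 : |t| ^ 2 = t ^ 2 := sq_abs t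
    nlinarith [sq_nonneg (|t| - 1), sq_nonneg (‖x'‖ - 1), sq_nonneg (|t| - ‖x'‖)]
  have key : (1 + |t|) ^ K * (1 + ‖x'‖) ^ K ≤ 2 ^ K * (1 + ‖t • ω + x'‖) ^ (2 * K) := by
    calc (1 + |t|) ^ K * (1 + ‖x'‖) ^ K = ((1 + |t|) * (1 + ‖x'‖)) ^ K := (mul_pow _ _ _).symm
    _ ≤ (2 * (1 + ‖t • ω + x'‖) ^ 2) ^ K := pow_le_pow_left₀ (by positivity) h1 K
    _ = 2 ^ K * (1 + ‖t • ω + x'‖) ^ (2 * K) := by rw [mul_pow, ← pow_mul]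
  rw [← mul_inv, ← div_eq_mul_inv, inv_eq_one_div, div_le_div_iff₀ (by positivity) (by positivity),
    one_mul, mul_comm ((1 + |t|) ^ K) _, mul_comm (2 ^ K) _]
  calc (1 + ‖x'‖) ^ K * (1 + |t|) ^ K = (1 + |t|) ^ K * (1 + ‖x'‖) ^ K := by ring
  _ ≤ 2 ^ K * (1 + ‖t • ω + x'‖) ^ (2 * K) := key
  _ = (1 + ‖t • ω + x'‖) ^ (2 * K) * 2 ^ K := by ring

lemma integral_tendsto_zero (f : SchwartzMap (E N) ℝ) (ω : E N) (hω : ‖ω‖ = 1)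
    (hperp : ∀ z, ⟪ω, Φ z⟫ = 0) :
    Filter.Tendsto (fun t : ℝ => ∫ z : EuclideanSpace ℝ (Fin d), f (t • ω + Φ z))
      Filter.atTop (nhds 0) := by
  obtain ⟨C, hC, hCf⟩ := schwartz_decay_bound f (2 * (d + 1))
  set I : ℝ := ∫ z : EuclideanSpace ℝ (Fin d), ((1 + ‖z‖) ^ (d+1 : ℕ))⁻¹ with hI
  have hbound : ∀ t : ℝ, ‖∫ z : EuclideanSpace ℝ (Fin d), f (t • ω + Φ z)‖
      ≤ (C * 2 ^ (d+1) * I) * ((1 + |t|) ^ (d+1 : ℕ))⁻¹ := by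
    intro t
    have step : ∀ z : EuclideanSpace ℝ (Fin d), ‖f (t • ω + Φ z)‖
        ≤ (C * 2 ^ (d+1) * ((1 + |t|) ^ (d+1 : ℕ))⁻¹) * ((1 + ‖z‖) ^ (d+1 : ℕ))⁻¹ := by
      intro z
      rw [Real.norm_eq_abs]
      calc |f (t • ω + Φ z)| ≤ C * ((1 + ‖t • ω + Φ z‖) ^ (2 * (d+1)))⁻¹ := hCf _
      _ ≤ C * (2 ^ (d+1) * (((1 + |t|) ^ (d+1 : ℕ))⁻¹ * ((1 + ‖Φ z‖) ^ (d+1 : ℕ))⁻¹)) :=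
          mul_le_mul_of_nonneg_left (norm_split_bound ω (Φ z) hω (hperp z) t (d+1)) hC
      _ = (C * 2 ^ (d+1) * ((1 + |t|) ^ (d+1 : ℕ))⁻¹) * ((1 + ‖z‖) ^ (d+1 : ℕ))⁻¹ := by
          rw [Φ.norm_map]; ring
    calc ‖∫ z : EuclideanSpace ℝ (Fin d), f (t • ω + Φ z)‖
        ≤ ∫ z : EuclideanSpace ℝ (Fin d),
            (C * 2 ^ (d+1) * ((1 + |t|) ^ (d+1 : ℕ))⁻¹) * ((1 + ‖z‖) ^ (d+1 : ℕ))⁻¹ :=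
          norm_integral_le_of_norm_le (integrable_decay _) (Filter.Eventually.of_forall step)
    _ = (C * 2 ^ (d+1) * I) * ((1 + |t|) ^ (d+1 : ℕ))⁻¹ := by
          rw [integral_const_mul]; ring
  have hg : Filter.Tendsto (fun t : ℝ => (C * 2 ^ (d+1) * I) * ((1 + |t|) ^ (d+1 : ℕ))⁻¹)
      Filter.atTop (nhds 0) := by
    have h1 : Filter.Tendsto (fun t : ℝ => (1 + |t|) ^ (d+1 : ℕ)) Filter.atTop Filter.atTop :=
      (Filter.tendsto_pow_atTop (Nat.succ_ne_zero d)).comp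
        (Filter.tendsto_atTop_add_const_left _ 1 Filter.tendsto_abs_atTop_atTop)
    simpa using (tendsto_inv_atTop_zero.comp h1).const_mul (C * 2 ^ (d+1) * I)
  exact squeeze_zero_norm hbound hg

end Aux

section Alg

lemma trace_orthonormal {n : ℕ} (M : Fin n → Fin n → ℝ) {κ : Type*} [Fintype κ]
    (B : OrthonormalBasis κ ℝ (E n)) :
    ∑ q : κ, ∑ i : Fin n, ∑ j : Fin n, (B q) i * (B q) j * M i j = ∑ i : Fin n, M i i := by
  rw [Finset.sum_comm]
  have h1 : ∀ i : Fin n, ∑ q : κ, ∑ j : Fin n, (B q) i * (B q) j * M i j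
      = ∑ j : Fin n, (∑ q : κ, (B q) i * (B q) j) * M i j := by
    intro i
    rw [Finset.sum_comm]
    exact Finset.sum_congr rfl fun j _ => (Finset.sum_mul _ _ _).symm
  simp_rw [h1]
  have h2 : ∀ i j : Fin n, ∑ q : κ, (B q) i * (B q) j = if i = j then 1 else 0 := by
    intro i j
    have := B.sum_inner_mul_inner (EuclideanSpace.single i (1:ℝ)) (EuclideanSpace.single j (1:ℝ))
    simp only [EuclideanSpace.inner_single_left, EuclideanSpace.inner_single_right,
      RCLike.star_def, map_one, one_mul, mul_one, starRingEnd_apply, star_trivial] at this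
    rw [this]
    simp [EuclideanSpace.single_apply, eq_comm]
  simp_rw [h2]
  apply Finset.sum_congr rfl
  intro i _
  rw [Finset.sum_eq_single i]
  · simp
  · intro j _ hj; simp [Ne.symm hj, hj]
  · intro h; exact absurd (Finset.mem_univ i) h

lemma contr_perm {n m : ℕ} (f : TF n m) (hsym : IsSymTF f) (u : Fin m → E n)
    (σ : Equiv.Perm (Fin m)) (x : E n) : contr f (u ∘ σ) x = contr f u x := by
  unfold contr
  rw [← (Equiv.arrowCongr σ (Equiv.refl (Fin n))).symm.sum_comp]
  apply Finset.sum_congr rfl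
  intro idx _
  have h1 : (Equiv.arrowCongr σ (Equiv.refl (Fin n))).symm idx = idx ∘ σ := by
    funext j; simp [Equiv.arrowCongr]
  rw [h1, hsym x σ idx]
  congr 1
  exact Equiv.prod_comp σ fun j' => u j' (idx j')

lemma contr_snoc {n m : ℕ} (f : TF n (m+1)) (u : Fin (m+1) → E n) (x : E n) :
    contr f u x = ∑ idx : Fin m → Fin n, ∑ i : Fin n,
      f x (Fin.snoc idx i) * ((∏ j : Fin m, u j.castSucc (idx j)) * u (Fin.last m) i) := by
  unfold contr
  rw [← (Fin.snocEquiv (fun _ : Fin (m+1) => Fin n)).sum_comp, Fintype.sum_prod_type,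
    Finset.sum_comm]
  apply Finset.sum_congr rfl; intro idx _
  apply Finset.sum_congr rfl; intro i _
  have hsn : (Fin.snocEquiv (fun _ : Fin (m+1) => Fin n)) (i, idx) = Fin.snoc idx i := rfl
  rw [hsn, Fin.prod_univ_castSucc]
  rw [Fin.snoc_last]
  congr 1
  congr 1
  exact Finset.prod_congr rfl fun j _ => by rw [Fin.snoc_castSucc]

lemma schwartz_sum_apply {N : ℕ} {ι : Type*} (s : Finset ι) (f : ι → SchwartzMap (E N) ℝ)
    (x : E N) : (∑ i ∈ s, f i) x = ∑ i ∈ s, f i x := by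
  calc (∑ i ∈ s, f i) x = (SchwartzMap.coeHom (SchwartzMap (E N) ℝ) (E N) ℝ (∑ i ∈ s, f i)) x := rfl
  _ = (∑ i ∈ s, (SchwartzMap.coeHom (SchwartzMap (E N) ℝ) (E N) ℝ (f i))) x := by rw [map_sum]
  _ = ∑ i ∈ s, f i x := by rw [Finset.sum_apply]; rfl

lemma clm_eucl_expand {N : ℕ} (L : E N →L[ℝ] ℝ) (a : E N) :
    L a = ∑ i, a i * L (EuclideanSpace.single i 1) := by
  have ha := (EuclideanSpace.basisFun (Fin N) ℝ).sum_repr a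
  simp only [EuclideanSpace.basisFun_apply, EuclideanSpace.basisFun_repr] at ha
  conv_lhs => rw [← ha]
  rw [map_sum]
  simp [smul_eq_mul]

lemma sum3_comm {α β γ : Type*} [Fintype α] [Fintype β] [Fintype γ] (f : α → β → γ → ℝ) :
    ∑ a : α, ∑ b : β, ∑ c : γ, f a b c = ∑ c : γ, ∑ b : β, ∑ a : α, f a b c := by
  have h1 : ∀ a : α, ∑ b : β, ∑ c : γ, f a b c = ∑ c : γ, ∑ b : β, f a b c :=
    fun a => Finset.sum_comm
  simp_rw [h1]
  rw [Finset.sum_comm]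
  exact Finset.sum_congr rfl fun c _ => Finset.sum_comm

variable {n m : ℕ}

def Wc (G : (Fin (m+1) → Fin n) → SchwartzMap (E n) ℝ) (cst : (Fin m → Fin n) → ℝ)
    (c : E n) : SchwartzMap (E n) ℝ :=
  ∑ idx : Fin m → Fin n, ∑ i : Fin n, (cst idx * c i) • G (Fin.snoc idx i)

lemma Wc_apply (G : (Fin (m+1) → Fin n) → SchwartzMap (E n) ℝ) (cst : (Fin m → Fin n) → ℝ)
    (c : E n) (x : E n) :
    Wc G cst c x = ∑ idx : Fin m → Fin n, ∑ i : Fin n,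
      (cst idx * c i) * G (Fin.snoc idx i) x := by
  rw [Wc, schwartz_sum_apply]
  refine Finset.sum_congr rfl fun idx _ => ?_
  rw [schwartz_sum_apply]
  refine Finset.sum_congr rfl fun i _ => ?_
  rw [SchwartzMap.smul_apply, smul_eq_mul]

def Mder (G : (Fin (m+1) → Fin n) → SchwartzMap (E n) ℝ) (cst : (Fin m → Fin n) → ℝ)
    (x : E n) (i j : Fin n) : ℝ :=
  ∑ idx : Fin m → Fin n, cst idx * fderiv ℝ (G (Fin.snoc idx j)) x (EuclideanSpace.single i 1)

lemma fderiv_Wc (G : (Fin (m+1) → Fin n) → SchwartzMap (E n) ℝ) (cst : (Fin m → Fin n) → ℝ)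
    (c : E n) (x a : E n) :
    fderiv ℝ (Wc G cst c) x a = ∑ i : Fin n, ∑ j : Fin n, a i * c j * Mder G cst x i j := by
  have hWc : ⇑(Wc G cst c) = fun y => ∑ idx : Fin m → Fin n, ∑ i : Fin n,
      (cst idx * c i) * G (Fin.snoc idx i) y := funext (Wc_apply G cst c)
  rw [hWc]
  have hdiff : ∀ (idx : Fin m → Fin n) (i : Fin n),
      DifferentiableAt ℝ (fun y => (cst idx * c i) * G (Fin.snoc idx i) y) x :=
    fun idx i => ((G (Fin.snoc idx i)).differentiable.differentiableAt).const_mul _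
  rw [fderiv_fun_sum (fun idx _ => DifferentiableAt.fun_sum (fun i _ => hdiff idx i))]
  rw [ContinuousLinearMap.sum_apply]
  have step : ∀ idx : Fin m → Fin n,
      (fderiv ℝ (fun y => ∑ i : Fin n, (cst idx * c i) * G (Fin.snoc idx i) y) x) a
        = ∑ j : Fin n, (cst idx * c j) * fderiv ℝ (G (Fin.snoc idx j)) x a := by
    intro idx
    rw [fderiv_fun_sum (fun i _ => hdiff idx i), ContinuousLinearMap.sum_apply]
    refine Finset.sum_congr rfl fun j _ => ?_
    rw [fderiv_const_mul ((G (Fin.snoc idx j)).differentiable.differentiableAt)]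
    simp [smul_eq_mul]
  simp_rw [step]
  have expand : ∀ (idx : Fin m → Fin n) (j : Fin n),
      (cst idx * c j) * fderiv ℝ (G (Fin.snoc idx j)) x a
        = ∑ i : Fin n, (cst idx * c j) *
            (a i * fderiv ℝ (G (Fin.snoc idx j)) x (EuclideanSpace.single i 1)) := by
    intro idx j
    rw [clm_eucl_expand (fderiv ℝ (G (Fin.snoc idx j)) x) a, Finset.mul_sum]
  simp_rw [expand]
  rw [sum3_comm (fun idx j i => (cst idx * c j) *
      (a i * fderiv ℝ (G (Fin.snoc idx j)) x (EuclideanSpace.single i 1)))]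
  refine Finset.sum_congr rfl fun i _ => ?_
  refine Finset.sum_congr rfl fun j _ => ?_
  rw [Mder, Finset.mul_sum]
  exact Finset.sum_congr rfl fun idx _ => by ring

lemma Mder_trace_zero (v : TF n (m+1)) (G : (Fin (m+1) → Fin n) → SchwartzMap (E n) ℝ)
    (hG : ∀ idx', (fun x => v x idx') = ⇑(G idx')) (hsol : div' v = fun _ _ => 0)
    (cst : (Fin m → Fin n) → ℝ) (x : E n) :
    ∑ i : Fin n, Mder G cst x i i = 0 := by
  unfold Mder
  rw [Finset.sum_comm]
  have key : ∀ idx : Fin m → Fin n,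
      ∑ i : Fin n, cst idx * fderiv ℝ (G (Fin.snoc idx i)) x (EuclideanSpace.single i 1)
        = cst idx * div' v x idx := by
    intro idx
    rw [← Finset.mul_sum]
    congr 1
    have hdiv : div' v x idx = ∑ i : Fin n, pd i (fun y => v y (Fin.snoc idx i)) x := rfl
    rw [hdiv]
    refine Finset.sum_congr rfl fun i _ => ?_
    rw [pd, hG (Fin.snoc idx i)]
  simp_rw [key]
  have hz : ∀ idx : Fin m → Fin n, div' v x idx = 0 := fun idx => congrFun (congrFun hsol x) idx
  simp [hz]

end Alg

/-- A solenoidal symmetric tensor field integrates to zero over hyperplanes against any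
symmetric product `ω₁^{⊙ℓ₁} ⊙ ⋯ ⊙ ω_{n-1}^{⊙ℓ_{n-1}} ⊙ ω^{⊙(ℓₙ+1)}` containing at least one
factor `ω` (the normal of the hyperplane). -/
theorem stmt10 {n m : ℕ} (v : TF n (m + 1)) (hS : IsSchwartzTF v) (hsym : IsSymTF v)
    (hsol : div' v = fun _ _ => 0)
    (ω : E n) (hω : ‖ω‖ = 1) (b : Fin (n - 1) → E n) (hb : Orthonormal ℝ b)
    (hbperp : ∀ i, b i ∈ (ℝ ∙ ω)ᗮ)
    (hspan : Submodule.span ℝ (Set.range b) = (ℝ ∙ ω)ᗮ)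
    (p : ℝ) (u : Fin (m + 1) → E n)
    (hu : ∀ j, u j = ω ∨ ∃ i, u j = b i) (huω : ∃ j, u j = ω) :
    hypInt (contr v u) ω p = 0 := by
  classical
  choose G hG using hS
  obtain ⟨j₀, hj₀⟩ := huω
  -- move the ω factor to the last slot
  set σ : Equiv.Perm (Fin (m+1)) := Equiv.swap j₀ (Fin.last m) with hσ
  set u' : Fin (m+1) → E n := u ∘ σ with hu'def
  have hu'last : u' (Fin.last m) = ω := by
    have hs : σ (Fin.last m) = j₀ := Equiv.swap_apply_right _ _
    rw [hu'def]
    simp only [Function.comp_apply, hs]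
    exact hj₀
  set cst : (Fin m → Fin n) → ℝ := fun idx => ∏ j : Fin m, u' j.castSucc (idx j) with hcstdef
  -- the contracted field as a Schwartz function
  have hcvu : contr v u = ⇑(Wc G cst ω) := by
    funext x
    rw [← contr_perm v hsym u σ x]
    rw [contr_snoc v (u ∘ σ) x, Wc_apply G cst ω x]
    refine Finset.sum_congr rfl fun idx _ => Finset.sum_congr rfl fun i _ => ?_
    have hGi := congrFun (hG (Fin.snoc idx i)) x
    rw [← hGi, show (u ∘ σ) (Fin.last m) = ω from hu'last]
    simp only [hcstdef]
    rw [hu'def]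
    ring
  -- orthogonal complement as a Euclidean space
  have hωmem : ω ∈ (ℝ ∙ ω) := Submodule.mem_span_singleton_self ω
  have hperpW : ∀ y : E n, y ∈ (ℝ ∙ ω)ᗮ → ⟪ω, y⟫ = 0 := fun y hy =>
    (Submodule.mem_orthogonal _ y).mp hy ω hωmem
  set b' : Fin (n-1) → ((ℝ ∙ ω)ᗮ : Submodule ℝ (E n)) := fun k => ⟨b k, hbperp k⟩ with hb'def
  have hb' : Orthonormal ℝ b' := by
    rw [orthonormal_iff_ite] at hb ⊢
    intro i j
    rw [Submodule.coe_inner]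
    exact hb i j
  have hspan' : ⊤ ≤ Submodule.span ℝ (Set.range b') := by
    have himg : (ℝ ∙ ω)ᗮ.subtype '' Set.range b' = Set.range b := by
      rw [← Set.range_comp]
      congr 1
    have hmap : Submodule.map (ℝ ∙ ω)ᗮ.subtype (Submodule.span ℝ (Set.range b'))
        = Submodule.map (ℝ ∙ ω)ᗮ.subtype ⊤ := by
      rw [Submodule.map_span, himg, hspan, Submodule.map_subtype_top]
    exact (Submodule.map_injective_of_injective (ℝ ∙ ω)ᗮ.injective_subtype hmap).ge
  set B : OrthonormalBasis (Fin (n-1)) ℝ ((ℝ ∙ ω)ᗮ : Submodule ℝ (E n)) :=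
    OrthonormalBasis.mk hb' hspan' with hBdef
  set Φ : EuclideanSpace ℝ (Fin (n-1)) →ₗᵢ[ℝ] E n :=
    (ℝ ∙ ω)ᗮ.subtypeₗᵢ.comp B.repr.symm.toLinearIsometry with hΦdef
  have hΦ : ∀ z, Φ z = ((B.repr.symm z : ((ℝ ∙ ω)ᗮ : Submodule ℝ (E n))) : E n) := fun z => rfl
  have hΦsingle : ∀ k : Fin (n-1), Φ (EuclideanSpace.single k 1) = b k := by
    intro k
    rw [hΦ, B.repr_symm_single]
    have : B k = b' k := by rw [hBdef, OrthonormalBasis.coe_mk]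
    rw [this]
  have hperpΦ : ∀ z, ⟪ω, Φ z⟫ = 0 := fun z => hperpW _ (B.repr.symm z).2
  -- transfer the hyperplane integral
  have htransfer : ∀ (h : E n → ℝ) (q : ℝ),
      hypInt h ω q = ∫ z : EuclideanSpace ℝ (Fin (n-1)), h (q • ω + Φ z) := by
    intro h q
    exact subIntegral_eq ((ℝ ∙ ω)ᗮ : Submodule ℝ (E n)) B
      (fun y : ((ℝ ∙ ω)ᗮ : Submodule ℝ (E n)) => h (q • ω + (y : E n)))
  -- full orthonormal basis of E n
  set fam : (Fin (n-1)) ⊕ Unit → E n := Sum.elim b (fun _ => ω) with hfamdef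
  have honfam : Orthonormal ℝ fam := by
    rw [orthonormal_iff_ite]
    rintro (i | ⟨⟩) (j | ⟨⟩)
    · simp only [hfamdef, Sum.elim_inl]
      rw [orthonormal_iff_ite.mp hb i j]
      simp
    · simp only [hfamdef, Sum.elim_inl, Sum.elim_inr]
      rw [if_neg (by simp), real_inner_comm]
      exact hperpW _ (hbperp i)
    · simp only [hfamdef, Sum.elim_inl, Sum.elim_inr]
      rw [if_neg (by simp)]
      exact hperpW _ (hbperp j)
    · simp only [hfamdef, Sum.elim_inr]
      rw [if_pos trivial, real_inner_self_eq_norm_mul_norm, hω]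
      norm_num
  have hspanfam : ⊤ ≤ Submodule.span ℝ (Set.range fam) := by
    rw [hfamdef, Set.Sum.elim_range, Submodule.span_union, hspan, Set.range_const]
    rw [sup_comm]
    exact (Submodule.sup_orthogonal_of_hasOrthogonalProjection (K := ℝ ∙ ω)).ge
  set Bfull : OrthonormalBasis ((Fin (n-1)) ⊕ Unit) ℝ (E n) :=
    OrthonormalBasis.mk honfam hspanfam with hBfulldef
  have hBfull : ∀ q, Bfull q = fam q := fun q => by rw [hBfulldef, OrthonormalBasis.coe_mk]
  -- pointwise divergence identity
  have hdivpt : ∀ x : E n, fderiv ℝ (Wc G cst ω) x ω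
      = - ∑ k : Fin (n-1), fderiv ℝ (Wc G cst (b k)) x (b k) := by
    intro x
    have h0 : ∑ q : (Fin (n-1)) ⊕ Unit, fderiv ℝ (Wc G cst (Bfull q)) x (Bfull q) = 0 := by
      simp_rw [fderiv_Wc]
      rw [trace_orthonormal (Mder G cst x) Bfull]
      exact Mder_trace_zero v G hG hsol cst x
    rw [Fintype.sum_sum_type] at h0
    simp only [hBfull, hfamdef, Sum.elim_inl, Sum.elim_inr, Finset.univ_unique,
      Finset.sum_singleton] at h0
    linarith
  -- the derivative of the sliced integral vanishes
  have hd : ∀ t : ℝ,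
      (∫ z : EuclideanSpace ℝ (Fin (n-1)), fderiv ℝ (Wc G cst ω) (t • ω + Φ z) ω) = 0 := by
    intro t
    have heq : (fun z : EuclideanSpace ℝ (Fin (n-1)) => fderiv ℝ (Wc G cst ω) (t • ω + Φ z) ω)
        = fun z => - ∑ k : Fin (n-1), fderiv ℝ (Wc G cst (b k)) (t • ω + Φ z) (b k) :=
      funext fun z => hdivpt _
    rw [heq, integral_neg]
    have hint : ∀ k : Fin (n-1), Integrable (fun z : EuclideanSpace ℝ (Fin (n-1)) =>
        fderiv ℝ (Wc G cst (b k)) (t • ω + Φ z) (b k)) := by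
      intro k
      have hrw : (fun z : EuclideanSpace ℝ (Fin (n-1)) =>
          fderiv ℝ (Wc G cst (b k)) (t • ω + Φ z) (b k))
          = fun z => (LineDeriv.lineDerivOpCLM ℝ (SchwartzMap (E n) ℝ) (b k) (Wc G cst (b k))) (t • ω + Φ z) := by
        funext z; rw [LineDeriv.lineDerivOpCLM_apply, SchwartzMap.lineDerivOp_apply_eq_fderiv]
      rw [hrw]
      exact schwartz_comp_integrable Φ _ _
    rw [integral_finset_sum _ (fun k _ => hint k)]
    have hz : ∀ k : Fin (n-1),
        (∫ z : EuclideanSpace ℝ (Fin (n-1)), fderiv ℝ (Wc G cst (b k)) (t • ω + Φ z) (b k)) = 0 := by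
      intro k
      have := integral_fderiv_tangential Φ (Wc G cst (b k)) (t • ω) (EuclideanSpace.single k 1)
      rw [hΦsingle k] at this
      exact this
    simp [hz]
  -- conclude: the sliced integral is constant in t and tends to 0
  have hconst := integral_comp_const_of_deriv_zero Φ (Wc G cst ω) ω hd
  have htend := integral_tendsto_zero Φ (Wc G cst ω) ω hω hperpΦ
  have hFconst : (fun t : ℝ => ∫ z : EuclideanSpace ℝ (Fin (n-1)), (Wc G cst ω) (t • ω + Φ z))
      = fun _ : ℝ => ∫ z : EuclideanSpace ℝ (Fin (n-1)), (Wc G cst ω) (p • ω + Φ z) :=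
    funext fun t => hconst t p
  rw [hFconst] at htend
  have hzero : (∫ z : EuclideanSpace ℝ (Fin (n-1)), (Wc G cst ω) (p • ω + Φ z)) = 0 :=
    tendsto_nhds_unique tendsto_const_nhds htend
  rw [hcvu, htransfer (⇑(Wc G cst ω)) p]
  exact hzero

end
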